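/- Let h(S) = (Σ_{i∈S} a_i)/(b0 + Σ_{i∈S} b_i) with b0 > 0, a_i ≥ 0, b_i > 0, and suppose h is submodular over all subsets of N. Let n ∈ N minimize a_i/b_i. Then for every S ⊆ N with n ∉ S and every j ∉ S with j ≠ n, we have h(S) ≤ h(S∪{j}). -/
import Mathlib

lemma key_stmt_7 (A B x y aj bj : ℝ) (hA : 0 ≤ A) (hB : 0 < B) (hx : 0 ≤ x)
    (hy : 0 < y) (hbj : 0 < bj)
    (hsub : ((A + aj) + x) / ((B + bj) + y) - (A + aj) / (B + bj)
      ≤ (A + x) / (B + y) - A / B)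
    (hmin : x / y ≤ aj / bj) : A / B ≤ (A + aj) / (B + bj) := by
  have hB2 : 0 < B + bj := by linarith
  have hB3 : 0 < B + y := by linarith
  have hB4 : 0 < B + bj + y := by linarith
  rw [div_sub_div _ _ (ne_of_gt hB4) (ne_of_gt hB2),
      div_sub_div _ _ (ne_of_gt hB3) (ne_of_gt hB),
      div_le_div_iff₀ (by positivity) (by positivity)] at hsub
  rw [div_le_div_iff₀ hy hbj] at hmin
  rw [div_le_div_iff₀ hB hB2]
  by_contra hcon
  push_neg at hcon
  -- hcon : (A + aj) * B < A * (B + bj), i.e. D = aj*B - A*bj < 0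
  have hD : aj * B - A * bj < 0 := by nlinarith
  have hBx : B * x - A * y < 0 := by nlinarith [mul_lt_mul_of_pos_right hD hy, mul_le_mul_of_nonneg_right hmin hB.le]
  nlinarith [mul_pos hbj hB2, mul_pos hy hB3, mul_pos (mul_pos hbj hB2) hB,
    mul_lt_mul_of_pos_left hBx (mul_pos hbj hB2),
    mul_lt_mul_of_pos_left hD (mul_pos hy hB3)]

theorem stmt_7 {ι : Type*} [DecidableEq ι] (N : Finset ι) (a b : ι → ℝ) (b0 : ℝ)
    (hb0 : 0 < b0) (ha : ∀ i ∈ N, 0 ≤ a i) (hb : ∀ i ∈ N, 0 < b i)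
    (h : Finset ι → ℝ)
    (hdef : ∀ S : Finset ι, h S = (∑ i ∈ S, a i) / (b0 + ∑ i ∈ S, b i))
    (hsub : ∀ S : Finset ι, S ⊆ N → ∀ i ∈ N, ∀ j ∈ N, i ∉ S → j ∉ S → i ≠ j →
      h (insert i (insert j S)) - h (insert j S) ≤ h (insert i S) - h S)
    (n : ι) (hn : n ∈ N) (hnmin : ∀ i ∈ N, a n / b n ≤ a i / b i) :
    ∀ S : Finset ι, S ⊆ N → n ∉ S → ∀ j ∈ N, j ∉ S → j ≠ n →
      h S ≤ h (insert j S) := by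
  intro S hS hnS j hjN hjS hjn
  have hnj : n ≠ j := fun e => hjn e.symm
  have hkey := hsub S hS n hn j hjN hnS hjS hnj
  have hnjS : n ∉ insert j S := by simp [Finset.mem_insert, hnj, hnS]
  rw [hdef, hdef, hdef, hdef, Finset.sum_insert hnjS, Finset.sum_insert hnjS,
      Finset.sum_insert hjS, Finset.sum_insert hjS, Finset.sum_insert hnS,
      Finset.sum_insert hnS] at hkey
  rw [hdef, hdef, Finset.sum_insert hjS, Finset.sum_insert hjS]
  have hA : 0 ≤ ∑ i ∈ S, a i := Finset.sum_nonneg fun i hi => ha i (hS hi)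
  have hB : 0 < b0 + ∑ i ∈ S, b i := by
    have : 0 ≤ ∑ i ∈ S, b i := Finset.sum_nonneg fun i hi => (hb i (hS hi)).le
    linarith
  have := key_stmt_7 (∑ i ∈ S, a i) (b0 + ∑ i ∈ S, b i) (a n) (b n) (a j) (b j)
    hA hB (ha n hn) (hb n hn) (hb j hjN) (by convert hkey using 3 <;> ring) (hnmin j hjN)
  convert this using 2 <;> ring
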